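/- arXiv:2107.12624 — 2 statements merged into one kernel-verified Lean document; each statement's English description precedes it below -/
import Mathlib

section
/- For every rational polytope P contained in [0,1]^k there exists a McNaughton function g on [0,1]^k whose oneset {x ∈ [0,1]^k : g(x) = 1} equals P. -/
open Set MeasureTheory

/-- The unit cube `[0,1]^n` in `ℝ^n`. -/
def cube (n : ℕ) : Set (Fin n → ℝ) := Set.Icc 0 1

/-- `f` is a McNaughton function on `[0,1]^n`: continuous on the cube, `[0,1]`-valued there,
and piecewise affine with integer coefficients. -/
def IsMcNaughton (n : ℕ) (f : (Fin n → ℝ) → ℝ) : Prop :=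
  ContinuousOn f (cube n) ∧
  (∀ x ∈ cube n, f x ∈ Set.Icc (0 : ℝ) 1) ∧
  ∃ (m : ℕ) (a : Fin m → Fin n → ℤ) (b : Fin m → ℤ),
    ∀ x ∈ cube n, ∃ j : Fin m, f x = (b j : ℝ) + ∑ i, (a j i : ℝ) * x i


namespace FM

abbrev Sys (γ : Type) : Type := List ((γ → ℚ) × ℚ)

variable {γ δ : Type} [Fintype γ]

/-- `∑ aᵢ xᵢ` with rational coefficients, real point. -/
def dotp (a : γ → ℚ) (x : γ → ℝ) : ℝ := ∑ i, (a i : ℝ) * x i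

def Sol (S : Sys γ) : Set (γ → ℝ) := {x | ∀ p ∈ S, dotp p.1 x ≤ (p.2 : ℝ)}

lemma dotp_sum_elim [Fintype δ] (a : (δ ⊕ Fin 1) → ℚ) (x : δ → ℝ) (y : ℝ) :
    dotp a (Sum.elim x fun _ => y)
      = dotp (fun i => a (Sum.inl i)) x + (a (Sum.inr 0) : ℝ) * y := by
  simp [dotp, Fintype.sum_sum_type]

lemma dotp_combine (r s : ℚ) (a b : γ → ℚ) (x : γ → ℝ) :
    dotp (fun i => r * a i + s * b i) x = (r : ℝ) * dotp a x + (s : ℝ) * dotp b x := by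
  simp only [dotp, Finset.mul_sum]
  rw [← Finset.sum_add_distrib]
  refine Finset.sum_congr rfl fun i _ => ?_
  push_cast; ring

section foldr
variable {α : Type*} [LinearOrder α] {b c : α} {l : List α}

lemma foldr_min_mem (b : α) (l : List α) : l.foldr min b ∈ b :: l := by
  induction l with
  | nil => simp
  | cons a l ih =>
    rcases min_choice a (l.foldr min b) with h | h
    · simp only [List.foldr_cons, h]
      exact List.mem_cons_of_mem _ (List.mem_cons_self)
    · simp only [List.foldr_cons, h]
      rcases List.mem_cons.mp ih with h' | h'
      · rw [h']; exact List.mem_cons_self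
      · exact List.mem_cons_of_mem _ (List.mem_cons_of_mem _ h')

lemma foldr_max_mem (b : α) (l : List α) : l.foldr max b ∈ b :: l := by
  induction l with
  | nil => simp
  | cons a l ih =>
    rcases max_choice a (l.foldr max b) with h | h
    · simp only [List.foldr_cons, h]
      exact List.mem_cons_of_mem _ (List.mem_cons_self)
    · simp only [List.foldr_cons, h]
      rcases List.mem_cons.mp ih with h' | h'
      · rw [h']; exact List.mem_cons_self
      · exact List.mem_cons_of_mem _ (List.mem_cons_of_mem _ h')

lemma foldr_min_le_init : l.foldr min b ≤ b := by
  induction l with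
  | nil => simp
  | cons a l ih => exact le_trans (min_le_right _ _) ih

lemma le_foldr_max_init : b ≤ l.foldr max b := by
  induction l with
  | nil => simp
  | cons a l ih => exact le_trans ih (le_max_right _ _)

lemma foldr_min_le {a : α} (h : a ∈ l) : l.foldr min b ≤ a := by
  induction l with
  | nil => simp at h
  | cons c l ih =>
    rcases List.mem_cons.mp h with h' | h'
    · exact h' ▸ min_le_left _ _
    · exact le_trans (min_le_right _ _) (ih h')

lemma le_foldr_max {a : α} (h : a ∈ l) : a ≤ l.foldr max b := by
  induction l with
  | nil => simp at h
  | cons c l ih =>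
    rcases List.mem_cons.mp h with h' | h'
    · exact h' ▸ le_max_left _ _
    · exact le_trans (ih h') (le_max_right _ _)

lemma le_foldr_min (h0 : c ≤ b) (h : ∀ a ∈ l, c ≤ a) : c ≤ l.foldr min b := by
  induction l with
  | nil => simpa using h0
  | cons a l ih =>
    exact le_min (h a (List.mem_cons_self)) (ih fun a ha => h a (List.mem_cons_of_mem _ ha))

end foldr

variable [Fintype δ] [DecidableEq δ]

def elimSys (S : Sys (δ ⊕ Fin 1)) : Sys δ :=
  ((S.filter fun p => p.1 (Sum.inr 0) = 0).map fun p => (fun i => p.1 (Sum.inl i), p.2))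
    ++ S.flatMap fun p => S.filterMap fun q =>
        if 0 < p.1 (Sum.inr 0) ∧ q.1 (Sum.inr 0) < 0 then
          some (fun i => -q.1 (Sum.inr 0) * p.1 (Sum.inl i) + p.1 (Sum.inr 0) * q.1 (Sum.inl i),
            -q.1 (Sum.inr 0) * p.2 + p.1 (Sum.inr 0) * q.2)
        else none

noncomputable def lowList (S : Sys (δ ⊕ Fin 1)) (x : δ → ℝ) : List ℝ :=
  S.filterMap fun p =>
    if p.1 (Sum.inr 0) < 0 then
      some (((p.2 : ℝ) - dotp (fun i => p.1 (Sum.inl i)) x) / (p.1 (Sum.inr 0) : ℝ))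
    else none

noncomputable def upList (S : Sys (δ ⊕ Fin 1)) (x : δ → ℝ) : List ℝ :=
  S.filterMap fun p =>
    if 0 < p.1 (Sum.inr 0) then
      some (((p.2 : ℝ) - dotp (fun i => p.1 (Sum.inl i)) x) / (p.1 (Sum.inr 0) : ℝ))
    else none

lemma sol_elimSys (S : Sys (δ ⊕ Fin 1)) (x : δ → ℝ) :
    x ∈ Sol (elimSys S) ↔ ∃ y : ℝ, Sum.elim x (fun _ => y) ∈ Sol S := by
  constructor
  · intro hx
    have cross : ∀ l ∈ lowList S x, ∀ u ∈ upList S x, l ≤ u := by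
      intro l hl u hu
      rw [lowList, List.mem_filterMap] at hl
      obtain ⟨q, hq, hq2⟩ := hl
      by_cases hbq : q.1 (Sum.inr 0) < 0
      swap; · simp [hbq] at hq2
      rw [if_pos hbq, Option.some_inj] at hq2
      rw [upList, List.mem_filterMap] at hu
      obtain ⟨p, hp, hp2⟩ := hu
      by_cases hbp : 0 < p.1 (Sum.inr 0)
      swap; · simp [hbp] at hp2
      rw [if_pos hbp, Option.some_inj] at hp2
      have hmem : (fun i => -q.1 (Sum.inr 0) * p.1 (Sum.inl i) + p.1 (Sum.inr 0) * q.1 (Sum.inl i),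
          -q.1 (Sum.inr 0) * p.2 + p.1 (Sum.inr 0) * q.2) ∈ elimSys S := by
        rw [elimSys, List.mem_append]
        right
        rw [List.mem_flatMap]
        exact ⟨p, hp, List.mem_filterMap.mpr ⟨q, hq, by rw [if_pos ⟨hbp, hbq⟩]⟩⟩
      have hcomb := hx _ hmem
      dsimp only at hcomb
      rw [dotp_combine] at hcomb
      have hbq' : (q.1 (Sum.inr 0) : ℝ) < 0 := by exact_mod_cast hbq
      have hbp' : (0:ℝ) < (p.1 (Sum.inr 0) : ℝ) := by exact_mod_cast hbp
      have e1 : l * (q.1 (Sum.inr 0) : ℝ) = (q.2 : ℝ) - dotp (fun i => q.1 (Sum.inl i)) x := by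
        rw [← hq2, div_mul_cancel₀ _ (ne_of_lt hbq')]
      have e2 : u * (p.1 (Sum.inr 0) : ℝ) = (p.2 : ℝ) - dotp (fun i => p.1 (Sum.inl i)) x := by
        rw [← hp2, div_mul_cancel₀ _ (ne_of_gt hbp')]
      push_cast at hcomb
      nlinarith [mul_pos hbp' (neg_pos.mpr hbq')]
    have main : ∀ y : ℝ, (∀ l ∈ lowList S x, l ≤ y) → (∀ u ∈ upList S x, y ≤ u) →
        Sum.elim x (fun _ => y) ∈ Sol S := by
      intro y hy1 hy2 p hp
      rw [dotp_sum_elim]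
      rcases lt_trichotomy (p.1 (Sum.inr 0)) 0 with hb | hb | hb
      · have hl : ((p.2 : ℝ) - dotp (fun i => p.1 (Sum.inl i)) x) / (p.1 (Sum.inr 0) : ℝ)
            ∈ lowList S x := by
          rw [lowList, List.mem_filterMap]
          exact ⟨p, hp, by rw [if_pos hb]⟩
        have h := hy1 _ hl
        have hb' : (p.1 (Sum.inr 0) : ℝ) < 0 := by exact_mod_cast hb
        rw [div_le_iff_of_neg hb'] at h
        nlinarith
      · have hmem : ((fun i => p.1 (Sum.inl i)), p.2) ∈ elimSys S := by
          rw [elimSys, List.mem_append]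
          left
          exact List.mem_map.mpr ⟨p, List.mem_filter.mpr ⟨hp, by simp [hb]⟩, rfl⟩
        have h := hx _ hmem
        simp only [hb] at *
        simpa using h
      · have hu : ((p.2 : ℝ) - dotp (fun i => p.1 (Sum.inl i)) x) / (p.1 (Sum.inr 0) : ℝ)
            ∈ upList S x := by
          rw [upList, List.mem_filterMap]
          exact ⟨p, hp, by rw [if_pos hb]⟩
        have h := hy2 _ hu
        have hb' : (0:ℝ) < (p.1 (Sum.inr 0) : ℝ) := by exact_mod_cast hb
        rw [le_div_iff₀ hb'] at h
        nlinarith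
    rcases h1 : lowList S x with _ | ⟨l0, ls⟩
    · rcases h2 : upList S x with _ | ⟨u0, us⟩
      · exact ⟨0, main 0 (by rw [h1]; simp) (by rw [h2]; simp)⟩
      · refine ⟨us.foldr min u0, main _ (by rw [h1]; simp) ?_⟩
        intro u hu
        rw [h2] at hu
        rcases List.mem_cons.mp hu with h' | h'
        · exact h' ▸ foldr_min_le_init
        · exact foldr_min_le h'
    · refine ⟨ls.foldr max l0, main _ ?_ ?_⟩
      · intro l hl
        rw [h1] at hl
        rcases List.mem_cons.mp hl with h' | h'
        · exact h' ▸ le_foldr_max_init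
        · exact le_foldr_max h'
      · intro u hu
        have hy : ls.foldr max l0 ∈ lowList S x := by
          rw [h1]
          exact foldr_max_mem _ _
        exact cross _ hy _ hu
  · rintro ⟨y, hy⟩ r hr
    rw [elimSys, List.mem_append] at hr
    rcases hr with hr | hr
    · rw [List.mem_map] at hr
      obtain ⟨p, hp, rfl⟩ := hr
      have hp0 := List.mem_filter.mp hp
      have hb : p.1 (Sum.inr 0) = 0 := by simpa using hp0.2
      have h := hy p hp0.1
      rw [dotp_sum_elim, hb] at h
      simpa using h
    · rw [List.mem_flatMap] at hr
      obtain ⟨p, hp, hr⟩ := hr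
      rw [List.mem_filterMap] at hr
      obtain ⟨q, hq, hq2⟩ := hr
      by_cases hc : 0 < p.1 (Sum.inr 0) ∧ q.1 (Sum.inr 0) < 0
      swap; · simp [hc] at hq2
      rw [if_pos hc, Option.some_inj] at hq2
      subst hq2
      have h1 := hy p hp
      have h2 := hy q hq
      rw [dotp_sum_elim] at h1 h2
      rw [dotp_combine]
      dsimp only
      have hbq' : (q.1 (Sum.inr 0) : ℝ) < 0 := by exact_mod_cast hc.2
      have hbp' : (0:ℝ) < (p.1 (Sum.inr 0) : ℝ) := by exact_mod_cast hc.1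
      push_cast
      nlinarith

end FM

namespace FM

variable {α : Type} [Fintype α] [DecidableEq α]

/-- Reindex a system along an equivalence (contravariantly). -/
def reindex {γ δ : Type} (e : γ ≃ δ) (S : Sys δ) : Sys γ :=
  S.map fun p => (fun i => p.1 (e i), p.2)

lemma sol_reindex {γ δ : Type} [Fintype γ] [Fintype δ] (e : γ ≃ δ) (S : Sys δ) (x : γ → ℝ) :
    x ∈ Sol (reindex e S) ↔ (fun d => x (e.symm d)) ∈ Sol S := by
  constructor
  · intro h p hp
    have := h _ (List.mem_map.mpr ⟨p, hp, rfl⟩)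
    rwa [show dotp (fun i => p.1 (e i)) x = dotp p.1 (fun d => x (e.symm d)) from ?_] at this
    rw [dotp, dotp, ← Equiv.sum_comp e (fun d => (p.1 d : ℝ) * x (e.symm d))]
    exact Finset.sum_congr rfl fun i _ => by simp
  · intro h r hr
    rw [reindex, List.mem_map] at hr
    obtain ⟨p, hp, rfl⟩ := hr
    have := h p hp
    dsimp only
    rwa [show dotp (fun i => p.1 (e i)) x = dotp p.1 (fun d => x (e.symm d)) from ?_]
    rw [dotp, dotp, ← Equiv.sum_comp e (fun d => (p.1 d : ℝ) * x (e.symm d))]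
    exact Finset.sum_congr rfl fun i _ => by simp

lemma elim_many : ∀ (m : ℕ) (S : Sys (α ⊕ Fin m)),
    ∃ T : Sys α, ∀ x : α → ℝ, x ∈ Sol T ↔ ∃ w : Fin m → ℝ, Sum.elim x w ∈ Sol S := by
  intro m
  induction m with
  | zero =>
    intro S
    refine ⟨reindex (Equiv.sumEmpty α (Fin 0)).symm S, fun x => ?_⟩
    rw [sol_reindex]
    have hfe : ∀ w : Fin 0 → ℝ,
        Sum.elim x w = (fun d => x ((Equiv.sumEmpty α (Fin 0)).symm.symm d)) := by
      intro w
      funext d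
      rcases d with a | i
      · simp
      · exact i.elim0
    constructor
    · intro h
      exact ⟨Fin.elim0, by rw [hfe]; exact h⟩
    · rintro ⟨w, hw⟩
      rw [hfe w] at hw
      exact hw
  | succ m ih =>
    intro S
    set e : (α ⊕ Fin m) ⊕ Fin 1 ≃ α ⊕ Fin (m + 1) :=
      (Equiv.sumAssoc α (Fin m) (Fin 1)).trans ((Equiv.refl α).sumCongr finSumFinEquiv) with he
    obtain ⟨T, hT⟩ := ih (elimSys (reindex e S))
    refine ⟨T, fun x => ?_⟩
    rw [hT]
    have key : ∀ (w : Fin m → ℝ) (y : ℝ),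
        (fun d => (Sum.elim (Sum.elim x w) fun _ => y) (e.symm d)) =
          Sum.elim x (Fin.snoc w y) := by
      intro w y
      funext d
      have : ∀ g : (α ⊕ Fin m) ⊕ Fin 1,
          (Sum.elim (Sum.elim x w) fun _ => y) g = Sum.elim x (Fin.snoc w y) (e g) := by
        rintro ((a | i) | j)
        · simp [he, Equiv.sumAssoc]
        · simp only [he, Equiv.trans_apply, Equiv.sumAssoc_apply_inl_inr,
            Equiv.sumCongr_apply, Sum.map_inr, Sum.elim_inl, Sum.elim_inr]
          rw [show finSumFinEquiv (Sum.inl i) = Fin.castSucc i from rfl, Fin.snoc_castSucc]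
        · have hj : j = 0 := Subsingleton.elim _ _
          subst hj
          simp only [he, Equiv.trans_apply, Equiv.sumAssoc_apply_inr,
            Equiv.sumCongr_apply, Sum.map_inr, Sum.elim_inr]
          rw [show finSumFinEquiv (Sum.inr (0 : Fin 1)) = Fin.last m from ?_, Fin.snoc_last]
          apply Fin.ext
          simp [finSumFinEquiv]
      rw [this (e.symm d), Equiv.apply_symm_apply]
    constructor
    · rintro ⟨w, hw⟩
      rw [sol_elimSys] at hw
      obtain ⟨y, hy⟩ := hw
      rw [sol_reindex, key] at hy
      exact ⟨Fin.snoc w y, hy⟩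
    · rintro ⟨v, hv⟩
      refine ⟨Fin.init v, ?_⟩
      rw [sol_elimSys]
      refine ⟨v (Fin.last m), ?_⟩
      rw [sol_reindex, key, Fin.snoc_init_self]
      exact hv

end FM

namespace FM

lemma dotp_elim {k m : ℕ} (a : Fin k → ℚ) (b : Fin m → ℚ) (x : Fin k → ℝ) (w : Fin m → ℝ) :
    dotp (Sum.elim a b) (Sum.elim x w) = dotp a x + dotp b w := by
  simp [dotp, Fintype.sum_sum_type]

lemma dotp_single {γ : Type} [Fintype γ] [DecidableEq γ] (j : γ) (c : ℚ) (w : γ → ℝ) :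
    dotp (fun j' => if j' = j then c else 0) w = (c : ℝ) * w j := by
  simp [dotp, apply_ite (fun r : ℚ => (r : ℝ)), ite_mul, Finset.sum_ite_eq']

lemma dotp_const {γ : Type} [Fintype γ] (c : ℚ) (w : γ → ℝ) :
    dotp (fun _ => c) w = (c : ℝ) * ∑ j, w j := by
  simp [dotp, Finset.mul_sum]

lemma dotp_zero {γ : Type} [Fintype γ] (w : γ → ℝ) : dotp (fun _ => (0:ℚ)) w = 0 := by
  simp [dotp]

/-- Weyl: a rational V-polytope has a rational H-representation. -/
lemma weyl_rat (k : ℕ) (t : Finset (Fin k → ℝ))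
    (ht : ∀ v ∈ t, ∀ i, ∃ q : ℚ, v i = (q : ℝ)) :
    ∃ T : Sys (Fin k), ∀ x : Fin k → ℝ,
      x ∈ Sol T ↔ x ∈ convexHull ℝ (↑t : Set (Fin k → ℝ)) := by
  classical
  set m := t.card with hm
  set e : Fin m ≃ {v // v ∈ t} := t.equivFin.symm with he
  set v : Fin m → (Fin k → ℝ) := fun j => (e j : Fin k → ℝ) with hv
  have hqex : ∀ (j : Fin m) (i : Fin k), ∃ q : ℚ, v j i = (q : ℝ) :=
    fun j i => ht (e j) (e j).2 i
  choose q hq using hqex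
  set S : Sys (Fin k ⊕ Fin m) :=
    (List.ofFn fun j : Fin m =>
      ((Sum.elim (fun _ => (0:ℚ)) fun j' => if j' = j then (-1:ℚ) else 0), (0:ℚ)))
    ++ ([((Sum.elim (fun _ => (0:ℚ)) fun _ => (1:ℚ)), (1:ℚ)),
        ((Sum.elim (fun _ => (0:ℚ)) fun _ => (-1:ℚ)), (-1:ℚ))]
    ++ ((List.ofFn fun i : Fin k =>
        ((Sum.elim (fun i' => if i' = i then (1:ℚ) else 0) fun j => -(q j i)), (0:ℚ)))
    ++ (List.ofFn fun i : Fin k =>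
        ((Sum.elim (fun i' => if i' = i then (-1:ℚ) else 0) fun j => q j i), (0:ℚ))))) with hS
  have key : ∀ (x : Fin k → ℝ) (w : Fin m → ℝ),
      Sum.elim x w ∈ Sol S ↔
        ((∀ j, 0 ≤ w j) ∧ (∑ j, w j = 1) ∧ ∀ i, x i = ∑ j, (q j i : ℝ) * w j) := by
    intro x w
    rw [hS]
    simp only [Sol, Set.mem_setOf_eq, List.forall_mem_append, List.forall_mem_ofFn_iff,
      List.forall_mem_cons, List.forall_mem_singleton]
    constructor
    · rintro ⟨h1, ⟨h2a, h2b⟩, h3, h4⟩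
      refine ⟨fun j => ?_, ?_, fun i => ?_⟩
      · have := h1 j
        rw [dotp_elim, dotp_zero, dotp_single] at this
        push_cast at this
        linarith
      · have ha := h2a
        have hb := h2b
        rw [dotp_elim, dotp_zero, dotp_const] at ha hb
        push_cast at ha hb
        linarith
      · have ha := h3 i
        have hb := h4 i
        rw [dotp_elim, dotp_single] at ha hb
        have hsa : dotp (fun j => -(q j i)) w = -∑ j, (q j i : ℝ) * w j := by
          simp [dotp]
        have hsb : dotp (fun j => q j i) w = ∑ j, (q j i : ℝ) * w j := by
          simp [dotp]
        rw [hsa] at ha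
        rw [hsb] at hb
        push_cast at ha hb
        linarith
    · rintro ⟨h1, h2, h3⟩
      refine ⟨fun j => ?_, ⟨?_, ?_⟩, fun i => ?_, fun i => ?_⟩
      · rw [dotp_elim, dotp_zero, dotp_single]
        push_cast
        have := h1 j
        linarith
      · rw [dotp_elim, dotp_zero, dotp_const]
        push_cast
        linarith [h2]
      · rw [dotp_elim, dotp_zero, dotp_const]
        push_cast
        exact ⟨by linarith [h2], by simp⟩
      · rw [dotp_elim, dotp_single]
        have hsa : dotp (fun j => -(q j i)) w = -∑ j, (q j i : ℝ) * w j := by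
          simp [dotp]
        rw [hsa]
        push_cast
        have := h3 i
        linarith
      · rw [dotp_elim, dotp_single]
        have hsb : dotp (fun j => q j i) w = ∑ j, (q j i : ℝ) * w j := by
          simp [dotp]
        rw [hsb]
        push_cast
        have := h3 i
        linarith
  have sumT : ∀ f : (Fin k → ℝ) → ℝ, ∑ j, f (v j) = ∑ y ∈ t, f y := by
    intro f
    exact (Equiv.sum_comp e (fun y : {y // y ∈ t} => f ↑y)).trans (Finset.sum_coe_sort t f)
  obtain ⟨T, hT⟩ := elim_many m S
  refine ⟨T, fun x => ?_⟩
  rw [hT]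
  constructor
  · rintro ⟨w, hw⟩
    rw [key] at hw
    obtain ⟨h0, h1, h2⟩ := hw
    have hx : x = ∑ j, w j • v j := by
      funext i
      rw [Finset.sum_apply i Finset.univ (fun j => w j • v j)]
      simp only [Pi.smul_apply, smul_eq_mul]
      rw [h2 i]
      exact Finset.sum_congr rfl fun j _ => by rw [← hq j i]; ring
    have hc : Finset.univ.centerMass w v ∈ convexHull ℝ (↑t : Set (Fin k → ℝ)) :=
      Finset.centerMass_mem_convexHull _ (fun j _ => h0 j) (by rw [h1]; norm_num)
        (fun j _ => (e j).2)
    rwa [Finset.centerMass_eq_of_sum_1 _ _ h1, ← hx] at hc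
  · intro hx
    rw [Finset.convexHull_eq] at hx
    obtain ⟨W, hW0, hW1, hWc⟩ := hx
    refine ⟨fun j => W (v j), ?_⟩
    rw [key]
    refine ⟨fun j => hW0 _ (e j).2, ?_, fun i => ?_⟩
    · rw [sumT W]; exact hW1
    · rw [Finset.centerMass_eq_of_sum_1 _ _ hW1] at hWc
      have : x i = ∑ y ∈ t, W y * y i := by
        rw [← hWc, Finset.sum_apply i t (fun y => W y • id y)]
        simp
      rw [this, ← sumT (fun y => W y * y i)]
      exact Finset.sum_congr rfl fun j _ => by rw [← hq j i]; ring

end FM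

namespace FM

/-- Turn a rational system into an equivalent integer-coefficient system. -/
lemma integerize (k : ℕ) (T : Sys (Fin k)) :
    ∃ (M : ℕ) (A : Fin M → Fin k → ℤ) (C : Fin M → ℤ),
      ∀ x : Fin k → ℝ, x ∈ Sol T ↔ ∀ j, ∑ i, (A j i : ℝ) * x i ≤ (C j : ℝ) := by
  classical
  set d : Fin T.length → ℕ := fun j => (T.get j).2.den * ∏ i, ((T.get j).1 i).den with hd
  have hdpos : ∀ j, 0 < d j := fun j =>
    Nat.mul_pos (T.get j).2.pos (Finset.prod_pos fun i _ => ((T.get j).1 i).pos)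
  set A : Fin T.length → Fin k → ℤ :=
    fun j i => ((T.get j).1 i).num * ((d j) / ((T.get j).1 i).den : ℕ) with hA
  set C : Fin T.length → ℤ := fun j => (T.get j).2.num * ((d j) / (T.get j).2.den : ℕ) with hC
  have scale : ∀ (q : ℚ) (n : ℕ), q.den ∣ n → ((q.num * (n / q.den : ℕ) : ℤ) : ℚ) = n * q := by
    intro q n hdvd
    obtain ⟨r, hr⟩ := hdvd
    subst hr
    rw [Nat.mul_div_cancel_left r q.pos]
    push_cast
    rw [← Rat.mul_den_eq_num]
    ring
  have hAq : ∀ j i, ((A j i : ℤ) : ℚ) = (d j : ℚ) * (T.get j).1 i := fun j i =>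
    scale _ _ (Dvd.dvd.mul_left (Finset.dvd_prod_of_mem _ (Finset.mem_univ i)) _)
  have hCq : ∀ j, ((C j : ℤ) : ℚ) = (d j : ℚ) * (T.get j).2 := fun j =>
    scale _ _ (Dvd.intro _ rfl)
  refine ⟨T.length, A, C, fun x => ?_⟩
  have equi : ∀ j : Fin T.length,
      (dotp (T.get j).1 x ≤ ((T.get j).2 : ℝ) ↔ ∑ i, (A j i : ℝ) * x i ≤ (C j : ℝ)) := by
    intro j
    have hdr : (0:ℝ) < (d j : ℝ) := by exact_mod_cast hdpos j
    have hsum : ∑ i, (A j i : ℝ) * x i = (d j : ℝ) * dotp (T.get j).1 x := by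
      rw [dotp, Finset.mul_sum]
      refine Finset.sum_congr rfl fun i _ => ?_
      have : ((A j i : ℤ) : ℝ) = (d j : ℝ) * ((T.get j).1 i : ℝ) := by
        have := hAq j i
        exact_mod_cast congrArg (fun r : ℚ => (r : ℝ)) this
      rw [this]; ring
    have hc : ((C j : ℤ) : ℝ) = (d j : ℝ) * ((T.get j).2 : ℝ) := by
      have := hCq j
      exact_mod_cast congrArg (fun r : ℚ => (r : ℝ)) this
    rw [hsum, hc]
    exact (mul_le_mul_iff_right₀ hdr).symm
  constructor
  · intro h j
    exact (equi j).mp (h _ (by rw [show j = ⟨j.1, j.2⟩ from rfl]; exact T.get_mem ⟨j.1, j.2⟩))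
  · intro h p hp
    obtain ⟨j, hj⟩ := List.mem_iff_get.mp hp
    subst hj
    exact (equi j).mpr (h j)

lemma continuous_foldr_min {k : ℕ} (l : List ((Fin k → ℝ) → ℝ)) (h : ∀ f ∈ l, Continuous f) :
    Continuous fun x => (l.map fun f => f x).foldr min 1 := by
  induction l with
  | nil => simpa using continuous_const
  | cons f l ih =>
    simp only [List.map_cons, List.foldr_cons]
    exact (h f (List.mem_cons_self)).min (ih fun f hf => h f (List.mem_cons_of_mem _ hf))

end FM
theorem stmt13 (k : ℕ) (P : Set (Fin k → ℝ))
    (hP : ∃ t : Finset (Fin k → ℝ),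
      (∀ v ∈ t, ∀ i, ∃ q : ℚ, v i = (q : ℝ)) ∧ P = convexHull ℝ ↑t)
    (hPc : P ⊆ cube k) :
    ∃ g : (Fin k → ℝ) → ℝ, IsMcNaughton k g ∧ {x ∈ cube k | g x = 1} = P := by
  classical
  obtain ⟨t, ht, rfl⟩ := hP
  obtain ⟨T, hT⟩ := FM.weyl_rat k t ht
  obtain ⟨M, A, C, hAC⟩ := FM.integerize k T
  have hchar : ∀ x : Fin k → ℝ, x ∈ convexHull ℝ (↑t : Set (Fin k → ℝ)) ↔
      ∀ j, ∑ i, (A j i : ℝ) * x i ≤ (C j : ℝ) := fun x => (hT x).symm.trans (hAC x)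
  set L : Fin M → (Fin k → ℝ) → ℝ :=
    fun j x => 1 + (C j : ℝ) - ∑ i, (A j i : ℝ) * x i with hL
  set funs : List ((Fin k → ℝ) → ℝ) := List.ofFn L with hfuns
  set g : (Fin k → ℝ) → ℝ := fun x => max 0 ((funs.map fun f => f x).foldr min 1) with hg
  have hLmem : ∀ j, L j ∈ funs := fun j => List.mem_ofFn.mpr ⟨j, rfl⟩
  have hub : ∀ x : Fin k → ℝ, (funs.map fun f => f x).foldr min 1 ≤ 1 := fun x =>
    FM.foldr_min_le_init
  have hone : ∀ x : Fin k → ℝ, (g x = 1 ↔ ∀ j, 1 ≤ L j x) := by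
    intro x
    constructor
    · intro h j
      rcases le_total ((funs.map fun f => f x).foldr min 1) 0 with hv | hv
      · exfalso
        rw [hg] at h
        simp only at h
        rw [max_eq_left hv] at h
        norm_num at h
      · have hveq : (funs.map fun f => f x).foldr min 1 = 1 := by
          rw [hg] at h
          simp only at h
          rwa [max_eq_right hv] at h
        have hle := FM.foldr_min_le (b := (1:ℝ))
          (List.mem_map_of_mem (f := fun f => f x) (hLmem j))
        rw [hveq] at hle
        exact hle
    · intro h
      have hge : (1:ℝ) ≤ (funs.map fun f => f x).foldr min 1 := by
        refine FM.le_foldr_min le_rfl ?_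
        intro a ha
        rw [List.mem_map] at ha
        obtain ⟨f, hf, rfl⟩ := ha
        rw [hfuns, List.mem_ofFn] at hf
        obtain ⟨j, rfl⟩ := hf
        exact h j
      have heq : (funs.map fun f => f x).foldr min 1 = 1 := le_antisymm (hub x) hge
      rw [hg]
      simp only
      rw [heq]
      exact max_eq_right zero_le_one
  refine ⟨g, ⟨?_, ?_, ?_⟩, ?_⟩
  · apply Continuous.continuousOn
    apply Continuous.max continuous_const
    apply FM.continuous_foldr_min
    intro f hf
    rw [hfuns, List.mem_ofFn] at hf
    obtain ⟨j, rfl⟩ := hf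
    rw [hL]
    exact continuous_const.sub
      (continuous_finset_sum _ fun i _ => continuous_const.mul (continuous_apply i))
  · intro x _
    exact ⟨le_max_left _ _, max_le zero_le_one (hub x)⟩
  · refine ⟨M + 1 + 1, Fin.cons 0 (Fin.cons 0 fun j i => -A j i),
      Fin.cons 0 (Fin.cons 1 fun j => 1 + C j), ?_⟩
    intro x _
    rcases le_total ((funs.map fun f => f x).foldr min 1) 0 with hv | hv
    · refine ⟨0, ?_⟩
      rw [hg]
      simp only
      rw [max_eq_left hv]
      simp
    · rw [hg]
      simp only
      rw [max_eq_right hv]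
      rcases List.mem_cons.mp (FM.foldr_min_mem 1 (funs.map fun f => f x)) with he | he
      · refine ⟨(0 : Fin (M + 1)).succ, ?_⟩
        rw [he]
        simp
      · rw [List.mem_map] at he
        obtain ⟨f, hf, hfx⟩ := he
        rw [hfuns, List.mem_ofFn] at hf
        obtain ⟨j, rfl⟩ := hf
        refine ⟨j.succ.succ, ?_⟩
        rw [← hfx, hL]
        simp only [Fin.cons_succ]
        push_cast
        simp only [neg_mul, Finset.sum_neg_distrib]
        ring
  · ext x
    simp only [Set.mem_setOf_eq, Set.mem_sep_iff]
    constructor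
    · rintro ⟨hx, hgx⟩
      rw [hchar x]
      intro j
      have h1 := (hone x).mp hgx j
      rw [hL] at h1
      simp only at h1
      linarith
    · intro hx
      refine ⟨hPc hx, (hone x).mpr ?_⟩
      intro j
      have h1 := (hchar x).mp hx j
      rw [hL]
      simp only
      linarith
end

section
/- Let f_1, …, f_k and g be McNaughton functions on [0,1]^n, with g neither identically 0 nor identically 1, and let β be a strictly coherent book on f_1, …, f_k. Then there exists α with 0 < α < 1 such that the book β' on f_1, …, f_k, g defined by β'_i = β_i for i = 1, …, k and β'(g) = α is strictly coherent. -/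
set_option maxHeartbeats 1000000

open Set Bornology

variable {E : Type*} [NormedAddCommGroup E] [NormedSpace ℝ E] [FiniteDimensional ℝ E]

/-- From the support property at `β`, deduce that `β` lies in the closed convex hull and
is "internal": every point of the hull can be strictly extended through `β`. -/
lemma between_of_support {S : Set E} (hSne : S.Nonempty) {β : E}
    (H : ∀ ψ : E →ₗ[ℝ] ℝ, (∀ y ∈ S, ψ β ≤ ψ y) → ∀ y ∈ S, ψ y ≤ ψ β) :
    β ∈ closure (convexHull ℝ S) ∧
      ∀ q ∈ closure (convexHull ℝ S), ∃ q' ∈ closure (convexHull ℝ S),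
        ∃ t : ℝ, t ∈ Set.Ioo (0:ℝ) 1 ∧ β = t • q + (1 - t) • q' := by
  set K : Set E := closure (convexHull ℝ S) with hK
  have hKconv : Convex ℝ K := (convex_convexHull ℝ S).closure
  have hKclosed : IsClosed K := isClosed_closure
  have hSK : S ⊆ K := (subset_convexHull ℝ S).trans subset_closure
  -- β ∈ K
  have hβK : β ∈ K := by
    by_contra hβK
    obtain ⟨φ, u, hu1, hu2⟩ := geometric_hahn_banach_closed_point hKconv hKclosed hβK
    have := H (-φ.toLinearMap) (fun y hy => by
      simpa using (hu1 y (hSK hy)).le.trans hu2.le)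
    obtain ⟨y₀, hy₀⟩ := hSne
    have h1 := this y₀ hy₀
    simp only [LinearMap.neg_apply, ContinuousLinearMap.coe_coe, neg_le_neg_iff] at h1
    exact absurd (h1.trans_lt ((hu1 y₀ (hSK hy₀)).trans hu2)) (lt_irrefl _)
  refine ⟨hβK, ?_⟩
  intro q hq
  rcases eq_or_ne q β with rfl | hqβ
  · exact ⟨q, hq, 1/2, by norm_num, by module⟩
  -- set up the span of K - β
  set K₀ : Set E := (fun y => y - β) '' K with hK₀
  have h0K₀ : (0:E) ∈ K₀ := ⟨β, hβK, sub_self β⟩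
  have hK₀conv : Convex ℝ K₀ := by
    have : (fun y : E => y - β) = fun y => -β + y := by funext y; abel
    rw [hK₀, this]; exact hKconv.translate _
  set W : Submodule ℝ E := Submodule.span ℝ K₀ with hW
  have hK₀W : K₀ ⊆ (W : Set E) := Submodule.subset_span
  set K₁ : Set W := Subtype.val ⁻¹' K₀ with hK₁
  have h0K₁ : (0:W) ∈ K₁ := h0K₀
  have hK₁conv : Convex ℝ K₁ := hK₀conv.linear_preimage W.subtype
  have hvalK₁ : Subtype.val '' K₁ = K₀ := by
    ext z; constructor
    · rintro ⟨w, hw, rfl⟩; exact hw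
    · intro hz; exact ⟨⟨z, hK₀W hz⟩, hz, rfl⟩
  -- the span of K₁ is everything
  have hspan : Submodule.span ℝ K₁ = ⊤ := by
    apply Submodule.map_injective_of_injective W.injective_subtype
    rw [Submodule.map_top, Submodule.range_subtype, ← Submodule.span_image]
    simp only [Submodule.coe_subtype]
    rw [hvalK₁, hW]
  have haff : affineSpan ℝ K₁ = ⊤ := by
    rw [AffineSubspace.affineSpan_eq_top_iff_vectorSpan_eq_top_of_nonempty ℝ W W ⟨0, h0K₁⟩]
    rw [eq_top_iff, ← hspan]
    refine Submodule.span_le.2 fun v hv => ?_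
    exact Submodule.subset_span (by exact ⟨v, hv, 0, h0K₁, by simp⟩ :
      v ∈ K₁ -ᵥ K₁)
  have hint : (interior K₁).Nonempty :=
    (hK₁conv.interior_nonempty_iff_affineSpan_eq_top).2 haff
  -- direction d
  set d : E := β - q with hd
  have hdW : d ∈ W := by
    have : q - β ∈ K₀ := ⟨q, hq, rfl⟩
    have := hK₀W this
    have h2 : d = -(q - β) := by rw [hd]; abel
    rw [h2]; exact neg_mem this
  by_cases h0 : (0:W) ∈ interior K₁
  · -- interior case: extend a little bit past β
    have hc : Continuous fun s : ℝ => s • (⟨d, hdW⟩ : W) := by continuity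
    have : (fun s : ℝ => s • (⟨d, hdW⟩ : W)) ⁻¹' interior K₁ ∈ nhds (0:ℝ) := by
      apply hc.continuousAt.preimage_mem_nhds
      simpa using isOpen_interior.mem_nhds h0
    obtain ⟨ε, hε, hball⟩ := Metric.mem_nhds_iff.1 this
    set s : ℝ := ε/2 with hs
    have hs0 : 0 < s := half_pos hε
    have hsball : s ∈ Metric.ball (0:ℝ) ε := by
      simp only [Metric.mem_ball, Real.dist_eq, sub_zero, abs_of_pos hs0, hs]
      rw [abs_of_pos (half_pos hε)]; linarith
    have hsmem : s • (⟨d, hdW⟩ : W) ∈ K₁ := interior_subset (hball hsball)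
    have hsd : (s • d : E) ∈ K₀ := hsmem
    obtain ⟨y, hyK, hy⟩ := hsd
    have hy2 : y - β = s • d := hy
    have hy' : y = β + s • d := by rw [← hy2]; abel
    refine ⟨y, hyK, s/(1+s), ?_, ?_⟩
    · constructor
      · positivity
      · rw [div_lt_one (by positivity)]; linarith
    · have h1s : (1:ℝ) + s ≠ 0 := by positivity
      rw [hy', hd]
      match_scalars <;> field_simp <;> ring
  · -- boundary case: contradiction with the support property
    obtain ⟨c₀, hc₀⟩ := hint
    obtain ⟨φ, hφ⟩ := geometric_hahn_banach_open_point hK₁conv.interior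
      isOpen_interior h0
    have hφ0 : φ (0:W) = 0 := map_zero φ
    have hφc₀ : φ c₀ < 0 := by simpa [hφ0] using hφ c₀ hc₀
    have hφle : ∀ a ∈ K₁, φ a ≤ 0 := by
      intro a ha
      by_contra hpos
      push_neg at hpos
      set t : ℝ := φ a / (φ a - φ c₀) with ht
      have hden : 0 < φ a - φ c₀ := by linarith
      have ht0 : 0 < t := by positivity
      have ht1 : t < 1 := by rw [ht, div_lt_one hden]; linarith
      have hz : (1 - t) • a + t • c₀ ∈ interior K₁ :=
        hK₁conv.combo_closure_interior_mem_interior (subset_closure ha) hc₀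
          (by linarith) ht0 (by ring)
      have := hφ _ hz
      rw [hφ0, map_add, map_smul, map_smul] at this
      have hzval : (1 - t) * φ a + t * φ c₀ = 0 := by
        rw [ht]; field_simp; ring
      simp only [smul_eq_mul] at this
      linarith
    -- extend φ to a linear functional on E
    obtain ⟨W', hcompl⟩ := Submodule.exists_isCompl W
    set pr : E →ₗ[ℝ] W := W.projectionOnto W' hcompl with hpr
    set ψ : E →ₗ[ℝ] ℝ := φ.toLinearMap ∘ₗ pr with hψ
    have hψW : ∀ w : W, ψ (w : E) = φ w := by
      intro w
      simp [hψ, hpr, Submodule.projectionOnto_apply_left]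
    have hSle : ∀ y ∈ S, ψ y ≤ ψ β := by
      intro y hy
      have h1 : y - β ∈ K₀ := ⟨y, hSK hy, rfl⟩
      have h2 : ψ (y - β) ≤ 0 := by
        rw [show (y - β) = ((⟨y - β, hK₀W h1⟩ : W) : E) from rfl, hψW]
        exact hφle _ h1
      rw [map_sub] at h2
      linarith
    have hSge := H (-ψ) (fun y hy => by simpa using hSle y hy)
    have hCsub : K ⊆ {y : E | ψ β ≤ ψ y} := by
      rw [hK]
      apply closure_minimal
      · apply convexHull_min
        · intro y hy
          have := hSge y hy
          simpa using this
        · exact convex_halfSpace_ge ψ.isLinear _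
      · exact IsClosed.preimage (LinearMap.continuous_of_finiteDimensional ψ)
          isClosed_Ici
    obtain ⟨y₁, hy₁K, hy₁⟩ := (interior_subset hc₀ : c₀ ∈ K₁)
    have h3 : ψ (y₁ - β) = φ c₀ := by
      have h5 : (y₁ - β) = ((c₀ : W) : E) := hy₁
      rw [h5, hψW]
    have h4 : ψ β ≤ ψ y₁ := hCsub hy₁K
    rw [map_sub] at h3
    linarith


open MeasureTheory


open Set MeasureTheory

/-- The book `β` on `f 0, …, f (k-1)` is strictly coherent: every possibility of loss
for the bookmaker is paired by a possibility of gain. -/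
def StrictlyCoherent (n k : ℕ) (f : Fin k → (Fin n → ℝ) → ℝ) (β : Fin k → ℝ) : Prop :=
  ∀ σ : Fin k → ℝ, (∃ x ∈ cube n, ∑ i, σ i * (β i - f i x) < 0) →
    ∃ x' ∈ cube n, 0 < ∑ i, σ i * (β i - f i x')


lemma lin_eq_sum {m : ℕ} (ψ : (Fin m → ℝ) →ₗ[ℝ] ℝ) (y : Fin m → ℝ) :
    ψ y = ∑ i, ψ (Pi.single i 1) * y i := by
  conv_lhs => rw [pi_eq_sum_univ y]
  rw [map_sum]
  refine Finset.sum_congr rfl fun i _ => ?_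
  rw [LinearMap.map_smul, smul_eq_mul, mul_comm]
  congr 2
  funext j
  simp [Pi.single_apply, eq_comm]

/-- The coordinate-sum linear functional. -/
noncomputable def sumFn {m : ℕ} (σ : Fin m → ℝ) : (Fin m → ℝ) →ₗ[ℝ] ℝ :=
  ∑ i, σ i • LinearMap.proj i

lemma sumFn_apply {m : ℕ} (σ : Fin m → ℝ) (y : Fin m → ℝ) :
    sumFn σ y = ∑ i, σ i * y i := by
  simp [sumFn]

lemma snoc_smul_add {k : ℕ} (u : Fin k → ℝ) (c c' t t' : ℝ) (h : c + c' = 1) :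
    (Fin.snoc u (c*t + c'*t') : Fin (k+1) → ℝ)
      = c • (Fin.snoc u t : Fin (k+1) → ℝ) + c' • (Fin.snoc u t' : Fin (k+1) → ℝ) := by
  funext i
  refine Fin.lastCases ?_ ?_ i
  · simp [Fin.snoc_last]
  · intro j
    simp only [Fin.snoc_castSucc, Pi.add_apply, Pi.smul_apply, smul_eq_mul]
    linear_combination (-(u j)) * h


theorem stmt16 (n k : ℕ) (f : Fin k → (Fin n → ℝ) → ℝ) (g : (Fin n → ℝ) → ℝ)
    (hf : ∀ i, IsMcNaughton n (f i)) (hg : IsMcNaughton n g)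
    (hg0 : ∃ x ∈ cube n, g x ≠ 0) (hg1 : ∃ x ∈ cube n, g x ≠ 1)
    (β : Fin k → ℝ) (hβ : ∀ i, β i ∈ Set.Icc (0 : ℝ) 1)
    (hcoh : StrictlyCoherent n k f β) :
    ∃ α : ℝ, 0 < α ∧ α < 1 ∧
      StrictlyCoherent n (k + 1) (Fin.snoc f g) (Fin.snoc β α) := by
  classical
  have hcube_ne : (cube n).Nonempty :=
    ⟨0, by constructor <;> intro i <;> norm_num⟩
  have hcube_cpt : IsCompact (cube n) := isCompact_Icc
  set F : (Fin n → ℝ) → (Fin k → ℝ) := fun x i => f i x with hF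
  set F' : (Fin n → ℝ) → (Fin (k+1) → ℝ) := fun x => Fin.snoc (F x) (g x) with hF'
  set S : Set (Fin k → ℝ) := F '' cube n with hS
  set S' : Set (Fin (k+1) → ℝ) := F' '' cube n with hS'
  have hSne : S.Nonempty := hcube_ne.image F
  have hS'ne : S'.Nonempty := hcube_ne.image F'
  have hF'c : ContinuousOn F' (cube n) := by
    apply continuousOn_pi.2
    intro i
    refine Fin.lastCases ?_ (fun j => ?_) i
    · simpa [hF', Fin.snoc_last] using hg.1
    · simpa [hF', Fin.snoc_castSucc] using (hf j).1
  have hS'cpt : IsCompact S' := hcube_cpt.image_of_continuousOn hF'c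
  -- the support property of β w.r.t. S, from strict coherence
  have Hβ : ∀ ψ : (Fin k → ℝ) →ₗ[ℝ] ℝ, (∀ y ∈ S, ψ β ≤ ψ y) → ∀ y ∈ S, ψ y ≤ ψ β := by
    intro ψ hle y hy
    by_contra hlt
    push_neg at hlt
    obtain ⟨x₂, hx₂, rfl⟩ := hy
    set σ : Fin k → ℝ := fun i => ψ (Pi.single i 1) with hσ
    have key : ∀ x, ∑ i, σ i * (β i - f i x) = ψ β - ψ (F x) := by
      intro x
      rw [lin_eq_sum ψ β, lin_eq_sum ψ (F x), ← Finset.sum_sub_distrib]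
      refine Finset.sum_congr rfl fun i _ => ?_
      simp only [hσ, hF]
      ring
    obtain ⟨x', hx', hpos⟩ := hcoh σ ⟨x₂, hx₂, by rw [key]; linarith⟩
    rw [key] at hpos
    have := hle (F x') ⟨x', hx', rfl⟩
    linarith
  obtain ⟨hβK, hbet⟩ := between_of_support hSne Hβ
  set K : Set (Fin k → ℝ) := closure (convexHull ℝ S) with hK
  set K' : Set (Fin (k+1) → ℝ) := closure (convexHull ℝ S') with hK'
  have hK'conv : Convex ℝ K' := (convex_convexHull ℝ S').closure
  have hK'cpt : IsCompact K' :=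
    (isBounded_convexHull.2 hS'cpt.isBounded).isCompact_closure
  have hS'K' : S' ⊆ K' := (subset_convexHull ℝ S').trans subset_closure
  -- the projection
  set π : (Fin (k+1) → ℝ) →ₗ[ℝ] (Fin k → ℝ) := LinearMap.funLeft ℝ ℝ Fin.castSucc with hπdef
  have hπcont : Continuous π := LinearMap.continuous_of_finiteDimensional π
  have hπF' : ∀ x, π (F' x) = F x := by
    intro x
    funext i
    show (Fin.snoc (F x) (g x) : Fin (k+1) → ℝ) (Fin.castSucc i) = F x i
    rw [Fin.snoc_castSucc]
  have hπS : π '' S' = S := by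
    rw [hS', hS, Set.image_image]
    exact Set.image_congr fun x _ => hπF' x
  have hπK : π '' K' = K := by
    apply Subset.antisymm
    · refine (image_closure_subset_closure_image hπcont).trans ?_
      rw [π.image_convexHull, hπS]
    · have hcl : IsClosed (π '' K') := (hK'cpt.image hπcont).isClosed
      rw [hK]
      apply closure_minimal _ hcl
      calc convexHull ℝ S = π '' convexHull ℝ S' := by rw [π.image_convexHull, hπS]
        _ ⊆ π '' K' := Set.image_mono subset_closure
  -- the fibre over β
  set T : Set ℝ := {t : ℝ | (Fin.snoc β t : Fin (k+1) → ℝ) ∈ K'} with hT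
  have hjcont : Continuous (fun t : ℝ => (Fin.snoc β t : Fin (k+1) → ℝ)) := by
    apply continuous_pi
    intro i
    refine Fin.lastCases ?_ (fun j => ?_) i
    · simpa [Fin.snoc_last] using continuous_id'
    · simpa [Fin.snoc_castSucc] using continuous_const
  have hTne : T.Nonempty := by
    have : β ∈ π '' K' := hπK.symm ▸ hβK
    obtain ⟨p', hp', hπp'⟩ := this
    refine ⟨p' (Fin.last k), ?_⟩
    have hinit : Fin.init p' = β := hπp'
    show (Fin.snoc β (p' (Fin.last k)) : Fin (k+1) → ℝ) ∈ K'
    rw [← hinit, Fin.snoc_init_self]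
    exact hp'
  have hTclosed : IsClosed T := hK'cpt.isClosed.preimage hjcont
  have hlastK' : ∀ y ∈ K', y (Fin.last k) ∈ Set.Icc (0:ℝ) 1 := by
    intro y hy
    have hsub : K' ⊆ {y : Fin (k+1) → ℝ | y (Fin.last k) ∈ Set.Icc (0:ℝ) 1} := by
      apply closure_minimal
      · apply convexHull_min
        · rintro _ ⟨x, hx, rfl⟩
          show (Fin.snoc (F x) (g x) : Fin (k+1) → ℝ) (Fin.last k) ∈ Set.Icc (0:ℝ) 1
          rw [Fin.snoc_last]
          exact hg.2.1 x hx
        · exact (convex_Icc (0:ℝ) 1).linear_preimage (LinearMap.proj (R := ℝ) (φ := fun _ : Fin (k+1) => ℝ) (Fin.last k))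
      · exact isClosed_Icc.preimage (continuous_apply (Fin.last k))
    exact hsub hy
  have hTsub : T ⊆ Set.Icc (0:ℝ) 1 := by
    intro t ht
    have := hlastK' _ ht
    rwa [Fin.snoc_last] at this
  have hTcpt : IsCompact T := isCompact_Icc.of_isClosed_subset hTclosed hTsub
  have hTconv : Convex ℝ T := by
    intro t1 ht1 t2 ht2 c c' hc hc' hcc
    show (Fin.snoc β (c*t1 + c'*t2) : Fin (k+1) → ℝ) ∈ K'
    rw [snoc_smul_add β c c' t1 t2 hcc]
    exact hK'conv ht1 ht2 hc hc' hcc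
  set a : ℝ := sInf T with ha
  set b : ℝ := sSup T with hb
  have haT : a ∈ T := hTcpt.sInf_mem hTne
  have hbT : b ∈ T := hTcpt.sSup_mem hTne
  have hTsub2 : T ⊆ Set.Icc a b := fun t ht =>
    ⟨csInf_le hTcpt.isBounded.bddBelow ht, le_csSup hTcpt.isBounded.bddAbove ht⟩
  have hIccT : Set.Icc a b ⊆ T := hTconv.ordConnected.out haT hbT
  set α : ℝ := (a+b)/2 with hα
  have hab : a ≤ b := (hTsub2 haT).2
  have hαT : α ∈ T := hIccT ⟨by linarith, by linarith⟩
  set p : Fin (k+1) → ℝ := Fin.snoc β α with hp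
  have hpK' : p ∈ K' := hαT
  -- the betweenness property of p in K'
  have Pp : ∀ q ∈ K', ∃ q' ∈ K', ∃ τ : ℝ, τ ∈ Set.Ioo (0:ℝ) 1 ∧
      p = τ • q + (1 - τ) • q' := by
    intro q hq
    have hzK : π q ∈ K := hπK ▸ Set.mem_image_of_mem π hq
    obtain ⟨z', hz'K, t, ⟨ht0, ht1⟩, hβeq⟩ := hbet (π q) hzK
    have hz' : z' ∈ π '' K' := hπK.symm ▸ hz'K
    obtain ⟨q'', hq'', hπq''⟩ := hz'
    set r : Fin (k+1) → ℝ := t • q + (1 - t) • q'' with hr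
    have hrK' : r ∈ K' := hK'conv hq hq'' ht0.le (by linarith) (by ring)
    have hπr : π r = β := by
      rw [hr, map_add, LinearMap.map_smul, LinearMap.map_smul, hπq'', ← hβeq]
    have hrsnoc : r = Fin.snoc β (r (Fin.last k)) := by
      have hinit : Fin.init r = β := hπr
      conv_lhs => rw [← Fin.snoc_init_self r]
      rw [hinit]
    set s : ℝ := r (Fin.last k) with hsdef
    have hsT : s ∈ T := by
      show (Fin.snoc β s : Fin (k+1) → ℝ) ∈ K'
      rw [← hrsnoc]; exact hrK'
    obtain ⟨hs1, hs2⟩ := hTsub2 hsT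
    set w : ℝ := a + b - s with hw
    have hwT : w ∈ T := hIccT ⟨by simp only [hw]; linarith, by simp only [hw]; linarith⟩
    have hp2 : p = (1/2 : ℝ) • r + (1/2 : ℝ) • (Fin.snoc β w : Fin (k+1) → ℝ) := by
      have hαsw : α = (1/2)*s + (1/2)*w := by rw [hα, hw]; ring
      calc p = Fin.snoc β ((1/2)*s + (1/2)*w) := by rw [hp, ← hαsw]
        _ = (1/2 : ℝ) • (Fin.snoc β s : Fin (k+1) → ℝ)
              + (1/2 : ℝ) • (Fin.snoc β w : Fin (k+1) → ℝ) :=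
            snoc_smul_add β (1/2) (1/2) s w (by norm_num)
        _ = (1/2 : ℝ) • r + (1/2 : ℝ) • (Fin.snoc β w : Fin (k+1) → ℝ) := by
            rw [← hrsnoc]
    have hden : (0:ℝ) < 1 - t/2 := by linarith
    refine ⟨(((1-t)/2) / (1 - t/2)) • q''
        + ((1/2) / (1 - t/2)) • (Fin.snoc β w : Fin (k+1) → ℝ),
      ?_, t/2, ⟨by linarith, by linarith⟩, ?_⟩
    · have h2t : (2:ℝ) - t ≠ 0 := by linarith
      refine hK'conv hq'' (hwT : (Fin.snoc β w : Fin (k+1) → ℝ) ∈ K')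
        (div_nonneg (by linarith) (by linarith)) (div_nonneg (by linarith) (by linarith)) ?_
      field_simp
      ring_nf
    · have h2t : (4:ℝ) - t*2 ≠ 0 := by linarith
      have c := mul_inv_cancel₀ h2t
      rw [hp2, hr]
      match_scalars
      · field_simp
      · field_simp
        linear_combination (-1 : ℝ) * mul_inv_cancel₀ (show (2:ℝ) - t ≠ 0 by linarith)
      · field_simp
        linear_combination (-1 : ℝ) * mul_inv_cancel₀ (show (2:ℝ) - t ≠ 0 by linarith)
  -- the support property of p w.r.t. S'
  have Hp : ∀ ψ : (Fin (k+1) → ℝ) →ₗ[ℝ] ℝ,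
      (∀ y ∈ S', ψ p ≤ ψ y) → ∀ y ∈ S', ψ y ≤ ψ p := by
    intro ψ hle y hy
    by_contra h
    push_neg at h
    have hK'le : ∀ z ∈ K', ψ p ≤ ψ z := by
      have hsub : K' ⊆ {z | ψ p ≤ ψ z} := by
        apply closure_minimal
        · exact convexHull_min hle (convex_halfSpace_ge ψ.isLinear _)
        · exact isClosed_Ici.preimage (LinearMap.continuous_of_finiteDimensional ψ)
      exact fun z hz => hsub hz
    obtain ⟨q', hq', τ, ⟨hτ0, hτ1⟩, hpeq⟩ := Pp y (hS'K' hy)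
    have heq : ψ p = τ * ψ y + (1 - τ) * ψ q' := by
      rw [hpeq, map_add, LinearMap.map_smul, LinearMap.map_smul]; simp
    nlinarith [hK'le q' hq', mul_pos hτ0 (sub_pos.2 h)]
  -- the application map identity
  have happ : ∀ (i : Fin (k+1)) (x : Fin n → ℝ),
      (Fin.snoc f g : Fin (k+1) → (Fin n → ℝ) → ℝ) i x = F' x i := by
    intro i x
    refine Fin.lastCases ?_ (fun j => ?_) i
    · rw [Fin.snoc_last]
      show g x = (Fin.snoc (F x) (g x) : Fin (k+1) → ℝ) (Fin.last k)
      rw [Fin.snoc_last]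
    · rw [Fin.snoc_castSucc]
      show f j x = (Fin.snoc (F x) (g x) : Fin (k+1) → ℝ) (Fin.castSucc j)
      rw [Fin.snoc_castSucc]
  -- 0 < α
  have hα0 : 0 < α := by
    have haIcc := hTsub haT
    have hbIcc := hTsub hbT
    have hαnn : 0 ≤ α := by
      rw [hα]; linarith [haIcc.1, hbIcc.1]
    rcases hαnn.lt_or_eq with h | h
    · exact h
    exfalso
    set ψ : (Fin (k+1) → ℝ) →ₗ[ℝ] ℝ :=
      LinearMap.proj (R := ℝ) (φ := fun _ : Fin (k+1) => ℝ) (Fin.last k) with hψ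
    have hψp : ψ p = 0 := by
      show p (Fin.last k) = 0
      rw [hp, Fin.snoc_last, ← h]
    have hle : ∀ y ∈ S', ψ p ≤ ψ y := by
      rintro _ ⟨x, hx, rfl⟩
      rw [hψp]
      show (0:ℝ) ≤ (Fin.snoc (F x) (g x) : Fin (k+1) → ℝ) (Fin.last k)
      rw [Fin.snoc_last]
      exact (hg.2.1 x hx).1
    obtain ⟨x₀, hx₀, hgx₀⟩ := hg0
    have h2 := Hp ψ hle (F' x₀) ⟨x₀, hx₀, rfl⟩
    rw [hψp] at h2
    have h3 : (Fin.snoc (F x₀) (g x₀) : Fin (k+1) → ℝ) (Fin.last k) = g x₀ :=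
      Fin.snoc_last _ _
    have h4 : ψ (F' x₀) = g x₀ := h3
    rw [h4] at h2
    exact hgx₀ (le_antisymm h2 (hg.2.1 x₀ hx₀).1)
  -- α < 1
  have hα1 : α < 1 := by
    have haIcc := hTsub haT
    have hbIcc := hTsub hbT
    have hαle : α ≤ 1 := by
      rw [hα]; linarith [haIcc.2, hbIcc.2]
    rcases hαle.lt_or_eq with h | h
    · exact h
    exfalso
    set ψ : (Fin (k+1) → ℝ) →ₗ[ℝ] ℝ :=
      -LinearMap.proj (R := ℝ) (φ := fun _ : Fin (k+1) => ℝ) (Fin.last k) with hψ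
    have hψp : ψ p = -1 := by
      show -(p (Fin.last k)) = -1
      rw [hp, Fin.snoc_last, h]
    have hle : ∀ y ∈ S', ψ p ≤ ψ y := by
      rintro _ ⟨x, hx, rfl⟩
      rw [hψp]
      show -1 ≤ -((Fin.snoc (F x) (g x) : Fin (k+1) → ℝ) (Fin.last k))
      rw [Fin.snoc_last]
      linarith [(hg.2.1 x hx).2]
    obtain ⟨x₁, hx₁, hgx₁⟩ := hg1
    have h2 := Hp ψ hle (F' x₁) ⟨x₁, hx₁, rfl⟩
    rw [hψp] at h2
    have h4 : ψ (F' x₁) = -(g x₁) := by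
      show -((Fin.snoc (F x₁) (g x₁) : Fin (k+1) → ℝ) (Fin.last k)) = -(g x₁)
      rw [Fin.snoc_last]
    rw [h4] at h2
    exact hgx₁ (le_antisymm (hg.2.1 x₁ hx₁).2 (by linarith))
  -- conclusion
  refine ⟨α, hα0, hα1, ?_⟩
  rintro σ ⟨x₀, hx₀, hneg⟩
  set ψ : (Fin (k+1) → ℝ) →ₗ[ℝ] ℝ := sumFn σ with hψ
  have key : ∀ x, ∑ i, σ i * ((Fin.snoc β α : Fin (k+1) → ℝ) i
      - (Fin.snoc f g : Fin (k+1) → (Fin n → ℝ) → ℝ) i x) = ψ p - ψ (F' x) := by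
    intro x
    rw [hψ, sumFn_apply, sumFn_apply, ← Finset.sum_sub_distrib]
    refine Finset.sum_congr rfl fun i _ => ?_
    rw [happ i x]
    have : p i = (Fin.snoc β α : Fin (k+1) → ℝ) i := rfl
    rw [← this]
    ring
  by_contra hno
  push_neg at hno
  have hle : ∀ y ∈ S', ψ p ≤ ψ y := by
    rintro _ ⟨x, hx, rfl⟩
    have h5 := hno x hx
    rw [key x] at h5
    linarith
  have h6 := Hp ψ hle (F' x₀) ⟨x₀, hx₀, rfl⟩
  rw [key x₀] at hneg
  linarith
end
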